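/- Let G = (V, E) be a finite DAG and let c ≥ 2 be a real number. Then the weighting function ω : V → ℝ defined by ω(v) = (c+1)^|Desc(v)| is c-admissible; that is, for every v ∈ V, (c+1)^|Desc(v)| ≥ 1 + c · Σ_{w ∈ Γ(v)} (c+1)^|Desc(w)|. -/
import Mathlib


open scoped Classical

/-- `descSet E v`: the set of descendants of `v`, i.e. vertices reachable from
`v` by a directed path of length ≥ 1 (in a DAG these are automatically ≠ `v`). -/
noncomputable def descSet {V : Type*} [Fintype V] (E : V → V → Prop) (v : V) : Finset V :=
  Finset.univ.filter (fun u => Relation.TransGen E v u)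

lemma descSet_aux {V : Type*} [Fintype V] (E : V → V → Prop)
    (hacyc : ∀ v : V, ¬ Relation.TransGen E v v)
    (c : ℝ) (hc : 2 ≤ c) :
    ∀ S T : Finset V, (∀ w ∈ S, w ∈ T ∧ descSet E w ⊆ T) →
      c * ∑ w ∈ S, (c + 1) ^ (descSet E w).card
        ≤ (c + 1) ^ T.card - (c + 1) ^ (T.card - S.card) := by
  intro S
  induction S using Finset.strongInduction with
  | _ S ih =>
    intro T hST
    rcases S.eq_empty_or_nonempty with rfl | hne
    · simp
    · -- pick a maximal element of S w.r.t. reachability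
      have : IsTrans V (Relation.TransGen E) := ⟨fun _ _ _ => Relation.TransGen.trans⟩
      have : IsIrrefl V (Relation.TransGen E) := ⟨hacyc⟩
      have hwf : WellFounded (Relation.TransGen E) :=
        Finite.wellFounded_of_trans_of_irrefl _
      obtain ⟨w, hwS0, hmin0⟩ := hwf.has_min (↑S : Set V) (Finset.coe_nonempty.mpr hne)
      have hwS : w ∈ S := hwS0
      have hmin : ∀ x ∈ S, ¬ Relation.TransGen E x w := fun x hx => hmin0 x hx
      have hwT : w ∈ T := (hST w hwS).1
      have hSsubT : S ⊆ T := fun x hx => (hST x hx).1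
      have hn1 : 1 ≤ T.card := Finset.card_pos.mpr ⟨w, hwT⟩
      have hk1 : 1 ≤ S.card := Finset.card_pos.mpr hne
      have hkn : S.card ≤ T.card := Finset.card_le_card hSsubT
      set S' := S.erase w with hS'
      set T' := T.erase w with hT'
      have hsub : S' ⊂ S := Finset.erase_ssubset hwS
      have hST' : ∀ x ∈ S', x ∈ T' ∧ descSet E x ⊆ T' := by
        intro x hx
        have hxS : x ∈ S := Finset.mem_of_mem_erase hx
        have hxne : x ≠ w := Finset.ne_of_mem_erase hx
        refine ⟨Finset.mem_erase.mpr ⟨hxne, (hST x hxS).1⟩, ?_⟩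
        intro u hu
        have huT : u ∈ T := (hST x hxS).2 hu
        have hun : u ≠ w := by
          rintro rfl
          exact hmin x hxS ((Finset.mem_filter.mp hu).2)
        exact Finset.mem_erase.mpr ⟨hun, huT⟩
      have ihS' := ih S' hsub T' hST'
      have hT'card : T'.card = T.card - 1 := Finset.card_erase_of_mem hwT
      have hS'card : S'.card = S.card - 1 := Finset.card_erase_of_mem hwS
      have hexp : T'.card - S'.card = T.card - S.card := by omega
      have hdw : (descSet E w).card ≤ T.card - 1 := by
        have hsubw : descSet E w ⊆ T' := by
          intro u hu
          refine Finset.mem_erase.mpr ⟨?_, (hST w hwS).2 hu⟩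
          rintro rfl
          exact hacyc _ ((Finset.mem_filter.mp hu).2)
        calc (descSet E w).card ≤ T'.card := Finset.card_le_card hsubw
          _ = T.card - 1 := hT'card
      have hp1 : (1 : ℝ) ≤ c + 1 := by linarith
      have hpow : (c + 1) ^ (descSet E w).card ≤ (c + 1) ^ (T.card - 1) :=
        pow_le_pow_right₀ hp1 hdw
      have hsum : ∑ x ∈ S, (c + 1) ^ (descSet E x).card
          = (c + 1) ^ (descSet E w).card + ∑ x ∈ S', (c + 1) ^ (descSet E x).card :=
        (Finset.add_sum_erase S _ hwS).symm
      have hc0 : (0 : ℝ) < c := by linarith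
      have hstep : c * (c + 1) ^ (T.card - 1) = (c + 1) ^ T.card - (c + 1) ^ (T.card - 1) := by
        have h : (c + 1) ^ T.card = (c + 1) ^ (T.card - 1) * (c + 1) := by
          rw [← pow_succ]
          congr 1
          omega
        rw [h]
        ring
      rw [hexp, hT'card] at ihS'
      have h1 : c * (c + 1) ^ (descSet E w).card ≤ (c + 1) ^ T.card - (c + 1) ^ (T.card - 1) := by
        calc c * (c + 1) ^ (descSet E w).card ≤ c * (c + 1) ^ (T.card - 1) := by
              exact mul_le_mul_of_nonneg_left hpow hc0.le
          _ = _ := hstep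
      rw [hsum, mul_add]
      linarith

/-- In a finite DAG, for any real `c ≥ 2`, the weighting function
`ω(v) = (c+1)^|Desc(v)|` is `c`-admissible. -/
theorem stmt1 {V : Type*} [Fintype V] (E : V → V → Prop)
    (hacyc : ∀ v : V, ¬ Relation.TransGen E v v)
    (c : ℝ) (hc : 2 ≤ c) (v : V) :
    (c + 1) ^ (descSet E v).card
      ≥ 1 + c * ∑ w ∈ Finset.univ.filter (fun w => E v w),
          (c + 1) ^ (descSet E w).card := by
  set S := Finset.univ.filter (fun w => E v w) with hS
  have hST : ∀ w ∈ S, w ∈ descSet E v ∧ descSet E w ⊆ descSet E v := by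
    intro w hw
    have hEvw : E v w := (Finset.mem_filter.mp hw).2
    constructor
    · exact Finset.mem_filter.mpr ⟨Finset.mem_univ _, Relation.TransGen.single hEvw⟩
    · intro u hu
      exact Finset.mem_filter.mpr ⟨Finset.mem_univ _,
        (Relation.TransGen.single hEvw).trans (Finset.mem_filter.mp hu).2⟩
  have key := descSet_aux E hacyc c hc S (descSet E v) hST
  have hp1 : (1 : ℝ) ≤ c + 1 := by linarith
  have h1 : (1 : ℝ) ≤ (c + 1) ^ ((descSet E v).card - S.card) := one_le_pow₀ hp1
  linarith
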